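/- For every q with 0 < q < 3√3/2, letting m denote the unique real root of z³ − z + 1/q = 0, one has H̃(q) = h̃(m), i.e., H̃(q) = √((m+1)/(m−1)) · exp((m² − 2)/(2m(m² − 1))). -/

import Mathlib

open Filter Set

/-- `w` is the root of `q (z^3 - z) + 1 = 0` with `Im w ≥ 0`, `Re w > 0` having the
smallest real part among all such roots. -/
def IsQtilde (q : ℝ) (w : ℂ) : Prop :=
  (q : ℂ) * (w ^ 3 - w) + 1 = 0 ∧ 0 ≤ w.im ∧ 0 < w.re ∧
    ∀ z : ℂ, (q : ℂ) * (z ^ 3 - z) + 1 = 0 → 0 ≤ z.im → 0 < z.re → w.re ≤ z.re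

/-- `H̃(q) = |(q̃ - 1)/(q̃ + 1)| · exp(q · Re(q̃²))` where `q̃` is the distinguished root. -/
noncomputable def Htilde (q : ℝ) : ℝ :=
  ‖(Classical.epsilon (IsQtilde q) - 1) / (Classical.epsilon (IsQtilde q) + 1)‖ *
    Real.exp (q * ((Classical.epsilon (IsQtilde q)) ^ 2).re)

/-- `h̃(m) = √((m+1)/(m-1)) · exp((m² - 2)/(2 m (m² - 1)))`. -/
noncomputable def htilde (m : ℝ) : ℝ :=
  Real.sqrt ((m + 1) / (m - 1)) * Real.exp ((m ^ 2 - 2) / (2 * m * (m ^ 2 - 1)))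

set_option maxHeartbeats 2000000 in
/-- For 0 < q < 3√3/2, if m is the (unique) real root of z³ - z + 1/q = 0
then H̃(q) = h̃(m). -/
theorem Htilde_eq_htilde (q : ℝ) (hq0 : 0 < q) (hq : q < 3 * Real.sqrt 3 / 2)
    (m : ℝ) (hm : m ^ 3 - m + 1 / q = 0) :
    Htilde q = htilde m := by
  have hq' : q ≠ 0 := ne_of_gt hq0
  have hqm : q * (m ^ 3 - m) = -1 := by
    field_simp at hm
    linear_combination hm
  set s := Real.sqrt 3 with hs_def
  have hs2 : s ^ 2 = 3 := Real.sq_sqrt (by norm_num)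
  have hs0 : 0 ≤ s := Real.sqrt_nonneg 3
  have hs1 : 1 < s := by nlinarith
  -- the real root satisfies s*m < -2, hence m < -1 and m² > 4/3
  have hkey : 3 * s * (m ^ 3 - m) + 2 < 0 := by
    have h1 : q * (3 * s * (m ^ 3 - m) + 2) = 2 * q - 3 * s := by
      linear_combination 3 * s * hqm
    by_contra h
    push_neg at h
    have := mul_nonneg hq0.le h
    rw [h1] at this
    linarith
  have hsm : s * m < -2 := by
    by_contra h
    push_neg at h
    have h2 : 0 ≤ (s * m + 2) * (s * m - 1) ^ 2 := mul_nonneg (by linarith) (sq_nonneg _)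
    have h3 : (s * m + 2) * (s * m - 1) ^ 2 = 3 * s * (m ^ 3 - m) + 2 := by
      linear_combination (s * m ^ 3) * hs2
    linarith
  have hm1 : m < -1 := by nlinarith
  have hm0 : m ≠ 0 := by intro h; rw [h] at hm1; norm_num at hm1
  have hb2 : 0 < 3 * m ^ 2 / 4 - 1 := by nlinarith
  set b := Real.sqrt (3 * m ^ 2 / 4 - 1) with hb_def
  have hb0 : 0 < b := Real.sqrt_pos.2 hb2
  have hbsq : b ^ 2 = 3 * m ^ 2 / 4 - 1 := Real.sq_sqrt hb2.le
  set w : ℂ := ⟨-m / 2, b⟩ with hw_def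
  set w' : ℂ := ⟨-m / 2, -b⟩ with hw'_def
  have hwre : w.re = -m / 2 := rfl
  have hwim : w.im = b := rfl
  have hw're : w'.re = -m / 2 := rfl
  have hw'im : w'.im = -b := rfl
  have hSC : w + w' = -(m : ℂ) := by
    apply Complex.ext <;>
      simp only [Complex.add_re, Complex.add_im, Complex.neg_re, Complex.neg_im,
        Complex.ofReal_re, Complex.ofReal_im, hwre, hwim, hw're, hw'im] <;> ring
  have hP : w * w' = (m : ℂ) ^ 2 - 1 := by
    have hcast : (m : ℂ) ^ 2 - 1 = ((m ^ 2 - 1 : ℝ) : ℂ) := by push_cast; ring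
    rw [hcast]
    apply Complex.ext <;>
      simp only [Complex.mul_re, Complex.mul_im, Complex.ofReal_re, Complex.ofReal_im,
        hwre, hwim, hw're, hw'im]
    · nlinarith [hbsq]
    · ring
  have hQC : (q : ℂ) * ((m : ℂ) ^ 3 - (m : ℂ)) = -1 := by exact_mod_cast hqm
  have hfac : ∀ z : ℂ, (q : ℂ) * (z ^ 3 - z) + 1 =
      (q : ℂ) * (z - (m : ℂ)) * (z - w) * (z - w') := by
    intro z
    linear_combination ((q : ℂ) * z ^ 2 - (q : ℂ) * m * z) * hSC +
      ((q : ℂ) * m - (q : ℂ) * z) * hP + hQC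
  have hroots : ∀ z : ℂ, (q : ℂ) * (z ^ 3 - z) + 1 = 0 → 0 ≤ z.im → 0 < z.re → z = w := by
    intro z hz him hre
    rw [hfac z] at hz
    have hqc : (q : ℂ) ≠ 0 := by exact_mod_cast hq'
    rcases mul_eq_zero.1 hz with h | h
    · rcases mul_eq_zero.1 h with h | h
      · rcases mul_eq_zero.1 h with h | h
        · exact absurd h hqc
        · exfalso
          have hzm : z = (m : ℂ) := by linear_combination h
          rw [hzm, Complex.ofReal_re] at hre
          linarith
      · linear_combination h
    · exfalso
      have hzw : z = w' := by linear_combination h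
      rw [hzw, hw'im] at him
      linarith
  have hwIs : IsQtilde q w := by
    refine ⟨?_, ?_, ?_, ?_⟩
    · rw [hfac w]; ring
    · rw [hwim]; exact hb0.le
    · rw [hwre]; linarith
    · intro z hz him hre
      rw [hroots z hz him hre]
  have heps : Classical.epsilon (IsQtilde q) = w := by
    have hspec := Classical.epsilon_spec (⟨w, hwIs⟩ : ∃ x, IsQtilde q x)
    exact hroots _ hspec.1 hspec.2.1 hspec.2.2.1
  -- now compute
  unfold Htilde htilde
  rw [heps]
  have habs : ‖(w - 1) / (w + 1)‖ = Real.sqrt ((m + 1) / (m - 1)) := by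
    rw [norm_div]
    have h1 : ‖w - 1‖ = Real.sqrt (m ^ 2 + m) := by
      rw [Complex.norm_def, Complex.normSq_apply]
      congr 1
      simp only [Complex.sub_re, Complex.sub_im, Complex.one_re, Complex.one_im, hwre, hwim]
      nlinarith [hbsq]
    have h2 : ‖w + 1‖ = Real.sqrt (m ^ 2 - m) := by
      rw [Complex.norm_def, Complex.normSq_apply]
      congr 1
      simp only [Complex.add_re, Complex.add_im, Complex.one_re, Complex.one_im, hwre, hwim]
      nlinarith [hbsq]
    rw [h1, h2]
    have hne1 : m - 1 ≠ 0 := by intro h; linarith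
    have hne2 : m ^ 2 - m ≠ 0 := by intro h; nlinarith
    have hratio : (m + 1) / (m - 1) = (m ^ 2 + m) / (m ^ 2 - m) := by
      rw [div_eq_div_iff hne1 hne2]; ring
    rw [hratio, Real.sqrt_div (by nlinarith : (0:ℝ) ≤ m ^ 2 + m)]
  rw [habs]
  congr 2
  have hre : ((w ^ 2).re) = 1 - m ^ 2 / 2 := by
    simp only [pow_two, Complex.mul_re, hwre, hwim]
    nlinarith [hbsq]
  rw [hre]
  have hd : 2 * m * (m ^ 2 - 1) ≠ 0 := by
    have : 2 * m * (m ^ 2 - 1) < 0 := by nlinarith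
    exact ne_of_lt this
  rw [eq_comm, div_eq_iff hd]
  linear_combination (m ^ 2 - 2) * hqm
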